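/- Let β ∈ (0,1) and λ > 0 with ηλ ≥ 2(1+β). Then the recursion Δ(t+1) = (1 + β − ηλ)Δ(t) − βΔ(t−1) admits an initial condition (Δ(0), Δ(1)) ≠ (0,0) for which |Δ(t)| does not converge to 0; indeed the characteristic polynomial z² − (1+β−ηλ)z + β has a root z with |z| ≥ 1. -/

import Mathlib

open Filter

/-- If `β ∈ (0,1)`, `λ > 0` and `ηλ ≥ 2(1+β)`, the momentum recursion admits a
nonzero initial condition whose solution does not decay to `0`; indeed the
characteristic polynomial `z² − (1+β−ηλ)z + β` has a root of modulus `≥ 1`. -/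
theorem momentum_lms_instability (β η lam : ℝ) (hβ : β ∈ Set.Ioo (0:ℝ) 1)
    (hlam : 0 < lam) (h : 2 * (1 + β) ≤ η * lam) :
    (∃ Δ : ℕ → ℝ,
        (∀ t, Δ (t + 2) = (1 + β - η * lam) * Δ (t + 1) - β * Δ t) ∧
        (Δ 0, Δ 1) ≠ (0, 0) ∧
        ¬ Tendsto (fun t => |Δ t|) atTop (nhds 0)) ∧
    (∃ z : ℂ, z ^ 2 - (1 + β - η * lam) * z + β = 0 ∧ 1 ≤ ‖z‖) := by
  obtain ⟨hβ0, hβ1⟩ := hβ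
  set a : ℝ := 1 + β - η * lam with ha_def
  have ha : a ≤ -(1 + β) := by simp only [ha_def]; linarith
  have hdisc : (0:ℝ) ≤ a ^ 2 - 4 * β := by nlinarith
  set s : ℝ := Real.sqrt (a ^ 2 - 4 * β) with hs_def
  have hs2 : s ^ 2 = a ^ 2 - 4 * β := Real.sq_sqrt hdisc
  have hs0 : 0 ≤ s := Real.sqrt_nonneg _
  set r : ℝ := (a - s) / 2 with hr_def
  have hsge : 1 - β ≤ s := by
    have h1 : (1 - β) ^ 2 ≤ a ^ 2 - 4 * β := by nlinarith
    nlinarith [hs2, hs0]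
  have hr : r ≤ -1 := by simp only [hr_def]; linarith
  have hroot : r ^ 2 = a * r - β := by
    have : r = (a - s) / 2 := hr_def
    nlinarith [hs2]
  have habs : 1 ≤ |r| := by rw [abs_of_nonpos (by linarith)]; linarith
  constructor
  · refine ⟨fun t => r ^ t, fun t => ?_, by simp, ?_⟩
    · show r ^ (t + 2) = a * r ^ (t + 1) - β * r ^ t
      calc r ^ (t + 2) = r ^ t * r ^ 2 := by ring
        _ = r ^ t * (a * r - β) := by rw [hroot]
        _ = a * r ^ (t + 1) - β * r ^ t := by ring
    · intro hT
      have hlt : ∀ᶠ t in atTop, |r ^ t| < 1 := by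
        have := hT.eventually (eventually_lt_nhds one_pos)
        simpa using this
      obtain ⟨t, ht⟩ := hlt.exists
      have : (1:ℝ) ≤ |r ^ t| := by
        rw [abs_pow]; exact one_le_pow₀ habs
      linarith
  · refine ⟨(r : ℂ), ?_, ?_⟩
    · have : r ^ 2 - a * r + β = 0 := by linarith [hroot]
      rw [← ha_def] at *
      exact_mod_cast congrArg (Complex.ofReal) this
    · rw [Complex.norm_real, Real.norm_eq_abs]; exact habs
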